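/- (Velocities confined to a rectangle.) Let R > 1, 0 < δ ≤ δ' ≤ 1 and let 𝓡 ⊂ ℝ² be a rectangle with side lengths δ and δ'. With the scattering setup (v_i = v* - ((v*-v̄_i)·ν*)ν*, all velocities in B_R, v_j fixed), ∫ 1_{v_i - v_j ∈ 𝓡} |(v* - v̄_i)·ν*| dv* dν* ≤ C R² δ (|log δ| + |log δ'| + 1). -/

import Mathlib

open MeasureTheory Metric
open scoped RealInnerProductSpace
open scoped ENNReal Pointwise

noncomputable section

/-- The plane `ℝ²`. -/
abbrev E2 : Type := EuclideanSpace ℝ (Fin 2)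

/-- The surface measure on the unit circle `𝕊¹ ⊂ ℝ²`. -/
def sphμ : Measure (sphere (0 : E2) 1) := (volume : Measure E2).toSphere

/-- The post-collisional velocity `v_i = v* - ((v* - v̄_i)·ν*) ν*`. -/
def scat (vbar v : E2) (ν : E2) : E2 := v - ⟪v - vbar, ν⟫ • ν

/-- A rectangle in `ℝ²` with corner `c`, orthonormal directions `e₁, e₂` and side
lengths `δ, δ'`. -/
def rect (c e₁ e₂ : E2) (δ δ' : ℝ) : Set E2 :=
  {w | ∃ a b : ℝ, a ∈ Set.Icc 0 δ ∧ b ∈ Set.Icc 0 δ' ∧ w = c + a • e₁ + b • e₂}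

lemma coord_le_norm (p : E2) (i : Fin 2) : |p i| ≤ ‖p‖ := by
  rw [EuclideanSpace.norm_eq]
  rw [← Real.sqrt_sq (abs_nonneg (p i))]
  apply Real.sqrt_le_sqrt
  rw [sq_abs]
  calc p i ^ 2 = ‖p i‖ ^ 2 := by rw [Real.norm_eq_abs, sq_abs]
  _ ≤ ∑ j, ‖p j‖ ^ 2 := Finset.single_le_sum (f := fun j => ‖p j‖ ^ 2) (fun j _ => sq_nonneg _) (Finset.mem_univ i)

lemma onb_pair (w₁ w₂ : E2) (h1 : ‖w₁‖ = 1) (h2 : ‖w₂‖ = 1) (h12 : ⟪w₁, w₂⟫ = 0) :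
    ∃ b : OrthonormalBasis (Fin 2) ℝ E2, b 0 = w₁ ∧ b 1 = w₂ := by
  have horth : Orthonormal ℝ ![w₁, w₂] := by
    rw [orthonormal_iff_ite]
    intro i j
    have i11 : ⟪w₁, w₁⟫ = 1 := by
      rw [real_inner_self_eq_norm_mul_norm, h1]; norm_num
    have i22 : ⟪w₂, w₂⟫ = 1 := by
      rw [real_inner_self_eq_norm_mul_norm, h2]; norm_num
    have i21 : ⟪w₂, w₁⟫ = 0 := by rw [real_inner_comm]; exact h12
    fin_cases i <;> fin_cases j <;> simp [i11, i22, i21, h12, h1, h2]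
  have card_eq : Fintype.card (Fin 2) = Module.finrank ℝ E2 := by
    simp [finrank_euclideanSpace_fin]
  let bb := basisOfOrthonormalOfCardEqFinrank horth card_eq
  have hbb : ⇑bb = ![w₁, w₂] := coe_basisOfOrthonormalOfCardEqFinrank horth card_eq
  refine ⟨bb.toOrthonormalBasis (by rwa [hbb]), ?_, ?_⟩ <;>
    simp [Module.Basis.coe_toOrthonormalBasis, hbb]

lemma exists_perp (w : E2) (hw : ‖w‖ = 1) :
    ∃ w' : E2, ‖w'‖ = 1 ∧ ⟪w, w'⟫ = 0 := by
  refine ⟨(WithLp.equiv 2 (Fin 2 → ℝ)).symm ![-(w 1), w 0], ?_, ?_⟩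
  · have hsq : w 0 ^ 2 + w 1 ^ 2 = 1 := by
      have := hw
      rw [EuclideanSpace.norm_eq, Fin.sum_univ_two] at this
      have h2 : ‖w 0‖ ^ 2 + ‖w 1‖ ^ 2 = 1 := by
        have := Real.sqrt_eq_one.mp this
        linarith
      simpa [Real.norm_eq_abs, sq_abs] using h2
    rw [EuclideanSpace.norm_eq, Fin.sum_univ_two]
    simp only [WithLp.equiv_symm_apply, WithLp.ofLp_toLp, Matrix.cons_val_zero, Matrix.cons_val_one,
      Matrix.head_cons, Real.norm_eq_abs, sq_abs]
    rw [show (-(w 1)) ^ 2 + (w 0) ^ 2 = 1 by nlinarith]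
    exact Real.sqrt_one
  · simp only [PiLp.inner_apply, RCLike.inner_apply, conj_trivial, Fin.sum_univ_two,
      WithLp.equiv_symm_apply, WithLp.ofLp_toLp, Matrix.cons_val_zero, Matrix.cons_val_one, Matrix.head_cons]
    ring

lemma volume_slab (w : E2) (hw : ‖w‖ = 1) (R : ℝ) (s : Set ℝ) (hs : MeasurableSet s) :
    volume {v : E2 | ‖v‖ < R ∧ ⟪w, v⟫ ∈ s} ≤ ENNReal.ofReal (2 * R) * volume s := by
  obtain ⟨w', hw', hww'⟩ := exists_perp w hw
  obtain ⟨b, hb0, hb1⟩ := onb_pair w w' hw hw' hww'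
  set t : Fin 2 → Set ℝ := ![s, Set.Ioo (-R) R] with ht
  have htmeas : ∀ i, MeasurableSet (t i) := by
    intro i; fin_cases i <;> simp [ht, hs, measurableSet_Ioo]
  set B : Set (EuclideanSpace ℝ (Fin 2)) :=
    (MeasurableEquiv.toLp 2 (Fin 2 → ℝ)).symm ⁻¹' (Set.univ.pi t) with hB
  have hBmeas : MeasurableSet B :=
    (MeasurableEquiv.toLp 2 (Fin 2 → ℝ)).symm.measurable (MeasurableSet.univ_pi htmeas)
  have hsub : {v : E2 | ‖v‖ < R ∧ ⟪w, v⟫ ∈ s} ⊆ b.repr ⁻¹' B := by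
    rintro v ⟨hv1, hv2⟩
    simp only [Set.mem_preimage, hB, Set.mem_pi, Set.mem_univ, forall_true_left]
    have happ : ∀ j, (MeasurableEquiv.toLp 2 (Fin 2 → ℝ)).symm (b.repr v) j = b.repr v j := by
      intro j; rfl
    rw [Fin.forall_fin_two, happ, happ]
    constructor
    · simpa [ht, b.repr_apply_apply, hb0] using hv2
    · simp only [ht, Matrix.cons_val_one, Matrix.head_cons, Set.mem_Ioo]
      have := coord_le_norm (b.repr v) 1
      rw [b.repr.norm_map] at this
      constructor
      · nlinarith [abs_nonneg (b.repr v 1), neg_abs_le (b.repr v 1)]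
      · nlinarith [le_abs_self (b.repr v 1)]
  calc volume {v : E2 | ‖v‖ < R ∧ ⟪w, v⟫ ∈ s} ≤ volume (b.repr ⁻¹' B) :=
        measure_mono hsub
    _ = volume B := b.measurePreserving_repr.measure_preimage hBmeas.nullMeasurableSet
    _ = (volume : Measure (Fin 2 → ℝ)) (Set.univ.pi t) :=
        (EuclideanSpace.volume_preserving_symm_measurableEquiv_toLp (Fin 2)).measure_preimage
          (MeasurableSet.univ_pi htmeas).nullMeasurableSet
    _ = ∏ i, volume (t i) := volume_pi_pi t
    _ = volume s * ENNReal.ofReal (R - -R) := by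
        rw [Fin.prod_univ_two]; simp [ht, Real.volume_Ioo]
    _ ≤ ENNReal.ofReal (2 * R) * volume s := by
        rw [mul_comm]
        have : R - -R = 2 * R := by ring
        rw [this]

instance : IsFiniteMeasure sphμ := by unfold sphμ; infer_instance

lemma sphμ_slab (w : E2) (hw : ‖w‖ = 1) (r : ℝ) :
    sphμ {ν : sphere (0 : E2) 1 | |⟪w, (ν : E2)⟫| ≤ r} ≤ ENNReal.ofReal (8 * r) := by
  set A := {ν : sphere (0 : E2) 1 | |⟪w, (ν : E2)⟫| ≤ r} with hA
  have hcont : Continuous fun ν : sphere (0 : E2) 1 => |⟪w, (ν : E2)⟫| :=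
    (Continuous.inner continuous_const continuous_subtype_val).abs
  have hAmeas : MeasurableSet A := (isClosed_le hcont continuous_const).measurableSet
  have hdim : (Module.finrank ℝ E2 : ℝ≥0∞) = 2 := by
    rw [show Module.finrank ℝ E2 = 2 from finrank_euclideanSpace_fin]; norm_cast
  rw [sphμ, Measure.toSphere_apply' _ hAmeas, hdim]
  have hsub : Set.Ioo (0:ℝ) 1 • ((↑) '' A : Set E2) ⊆
      {v : E2 | ‖v‖ < 1 ∧ ⟪w, v⟫ ∈ Set.Icc (-r) r} := by
    rintro x hx
    rw [Set.mem_smul] at hx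
    obtain ⟨τ, hτ, y, hy, rfl⟩ := hx
    obtain ⟨ν, hν, rfl⟩ := hy
    obtain ⟨hτ0, hτ1⟩ := hτ
    constructor
    · rw [norm_smul, Real.norm_eq_abs, abs_of_pos hτ0, norm_eq_of_mem_sphere ν, mul_one]
      exact hτ1
    · rw [real_inner_smul_right, Set.mem_Icc, ← abs_le]
      rw [abs_mul, abs_of_pos hτ0]
      calc τ * |⟪w, (ν : E2)⟫| ≤ 1 * |⟪w, (ν : E2)⟫| := by
            apply mul_le_mul_of_nonneg_right hτ1.le (abs_nonneg _)
        _ ≤ r := by rw [one_mul]; exact hν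
  calc (2 : ℝ≥0∞) * volume (Set.Ioo (0:ℝ) 1 • ((↑) '' A : Set E2))
      ≤ 2 * volume {v : E2 | ‖v‖ < 1 ∧ ⟪w, v⟫ ∈ Set.Icc (-r) r} := by
        exact mul_le_mul_right (measure_mono hsub) 2
    _ ≤ 2 * (ENNReal.ofReal (2 * 1) * volume (Set.Icc (-r) r)) := by
        gcongr
        exact volume_slab w hw 1 _ measurableSet_Icc
    _ ≤ ENNReal.ofReal (8 * r) := by
        rw [Real.volume_Icc]
        rw [show (2 : ℝ≥0∞) = ENNReal.ofReal 2 by simp]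
        rw [← ENNReal.ofReal_mul (by norm_num), ← ENNReal.ofReal_mul (by norm_num)]
        apply ENNReal.ofReal_le_ofReal
        linarith

set_option maxHeartbeats 1000000 in
lemma mem_uIcc_of_mul {k z p q : ℝ} (hk : k ≠ 0) (h : k * z ∈ Set.Icc p q) :
    z ∈ Set.uIcc (p / k) (q / k) := by
  obtain ⟨h1, h2⟩ := h
  have hcm : k * z = z * k := mul_comm k z
  rcases lt_or_gt_of_ne hk with hneg | hpos
  · rw [Set.mem_uIcc]
    right
    constructor
    · rw [div_le_iff_of_neg hneg]; linarith
    · rw [le_div_iff_of_neg hneg]; linarith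
  · rw [Set.mem_uIcc]
    left
    constructor
    · rw [div_le_iff₀ hpos]; linarith
    · rw [le_div_iff₀ hpos]; linarith

set_option maxHeartbeats 1000000 in
lemma inner_est (R δ δ' : ℝ) (c e₁ e₂ vbar vj : E2)
    (hR : 1 < R) (hδ : 0 < δ) (hδδ' : δ ≤ δ') (hδ'1 : δ' ≤ 1)
    (he₁ : ‖e₁‖ = 1) (he₂ : ‖e₂‖ = 1) (he₁₂ : ⟪e₁, e₂⟫ = 0) (hvbar : ‖vbar‖ ≤ R)
    (ν : sphere (0 : E2) 1) :
    (∫ v in Metric.ball (0 : E2) R,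
        Set.indicator {v : E2 | scat vbar v (ν : E2) - vj ∈ rect c e₁ e₂ δ δ'}
          (fun v => |⟪v - vbar, (ν : E2)⟫|) v ∂volume)
      ≤ 4 * R ^ 2 * (δ / max |⟪e₂, (ν : E2)⟫| (δ / (2 * δ'))) := by
  have hδ' : 0 < δ' := lt_of_lt_of_le hδ hδδ'
  set m := δ / (2 * δ') with hm
  have hm0 : 0 < m := by positivity
  have hm2 : m ≤ 1 / 2 := by
    rw [hm, div_le_div_iff₀ (by positivity) (by norm_num)]; linarith
  set n₁ := ⟪e₁, (ν : E2)⟫ with hn₁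
  set n₂ := ⟪e₂, (ν : E2)⟫ with hn₂
  set t := max |n₂| m with htdef
  have ht0 : 0 < t := lt_max_of_lt_right hm0
  obtain ⟨b, hb0, hb1⟩ := onb_pair e₁ e₂ he₁ he₂ he₁₂
  have hνn : ‖(ν : E2)‖ = 1 := norm_eq_of_mem_sphere ν
  have hn : n₁ ^ 2 + n₂ ^ 2 = 1 := by
    have h1 : ‖b.repr (ν : E2)‖ = 1 := by rw [b.repr.norm_map]; exact hνn
    rw [EuclideanSpace.norm_eq, Fin.sum_univ_two] at h1
    have h2 := Real.sqrt_eq_one.mp h1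
    rw [b.repr_apply_apply, b.repr_apply_apply, hb0, hb1, ← hn₁, ← hn₂] at h2
    simpa [Real.norm_eq_abs, sq_abs] using h2
  have hi11 : ⟪e₁, e₁⟫ = 1 := by
    rw [real_inner_self_eq_norm_mul_norm, he₁]; norm_num
  have hi22 : ⟪e₂, e₂⟫ = 1 := by
    rw [real_inner_self_eq_norm_mul_norm, he₂]; norm_num
  have hi21 : ⟪e₂, e₁⟫ = 0 := by rw [real_inner_comm]; exact he₁₂
  set ω : E2 := n₂ • e₁ - n₁ • e₂ with hω
  have hωn : ‖ω‖ = 1 := by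
    have h1 : ⟪ω, ω⟫ = 1 := by
      simp only [hω, inner_sub_left, inner_sub_right, real_inner_smul_left,
        real_inner_smul_right, hi11, hi22, hi21, he₁₂]
      nlinarith [hn]
    nlinarith [real_inner_self_eq_norm_mul_norm ω, norm_nonneg ω]
  set K₁ := ⟪e₁, vj⟫ + ⟪e₁, c⟫ with hK₁
  set K₂ := ⟪e₂, vj⟫ + ⟪e₂, c⟫ with hK₂
  set c₀ := ⟪vbar, (ν : E2)⟫ with hc₀
  set J : Set ℝ := if m ≤ |n₂| then
      Set.uIcc ((K₁ - c₀ * n₁) / n₂) ((K₁ - c₀ * n₁ + δ) / n₂)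
    else Set.uIcc ((K₂ - c₀ * n₂) / (-n₁)) ((K₂ - c₀ * n₂ + δ') / (-n₁)) with hJ
  have hJmeas : MeasurableSet J := by
    rw [hJ]; split_ifs <;> exact measurableSet_uIcc
  have hn₁big : ¬ m ≤ |n₂| → 1 / 2 ≤ |n₁| := by
    intro hcase
    push_neg at hcase
    have h2 : |n₂| ≤ 1 / 2 := le_trans hcase.le hm2
    have h3 : n₂ ^ 2 ≤ 1 / 4 := by nlinarith [sq_abs n₂, abs_nonneg n₂]
    have h4 : 3 / 4 ≤ n₁ ^ 2 := by linarith
    nlinarith [sq_abs n₁, abs_nonneg n₁]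
  have hJvol : volume J ≤ ENNReal.ofReal (δ / t) := by
    by_cases hcase : m ≤ |n₂|
    · rw [hJ, if_pos hcase, Real.volume_interval]
      have hlen : |(K₁ - c₀ * n₁ + δ) / n₂ - (K₁ - c₀ * n₁) / n₂| = δ / |n₂| := by
        rw [div_sub_div_same]
        rw [show K₁ - c₀ * n₁ + δ - (K₁ - c₀ * n₁) = δ by ring]
        rw [abs_div, abs_of_pos hδ]
      rw [hlen, htdef, max_eq_left hcase]
    · rw [hJ, if_neg hcase, Real.volume_interval]
      have hn₁2 : 1 / 2 ≤ |n₁| := hn₁big hcase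
      have hlen : |(K₂ - c₀ * n₂ + δ') / (-n₁) - (K₂ - c₀ * n₂) / (-n₁)| = δ' / |n₁| := by
        rw [div_sub_div_same]
        rw [show K₂ - c₀ * n₂ + δ' - (K₂ - c₀ * n₂) = δ' by ring]
        rw [abs_div, abs_of_pos hδ', abs_neg]
      rw [hlen]
      apply ENNReal.ofReal_le_ofReal
      push_neg at hcase
      rw [htdef, max_eq_right hcase.le, hm]
      have hsimp : δ / (δ / (2 * δ')) = 2 * δ' := by
        rw [div_div_eq_mul_div, mul_comm, mul_div_assoc, div_self (ne_of_gt hδ), mul_one]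
      rw [hsimp]
      calc δ' / |n₁| ≤ δ' / (1 / 2) :=
            div_le_div_of_nonneg_left hδ'.le (by norm_num) hn₁2
        _ = 2 * δ' := by ring
  have hJmem : ∀ v : E2, scat vbar v (ν : E2) - vj ∈ rect c e₁ e₂ δ δ' → ⟪ω, v⟫ ∈ J := by
    intro v hv
    obtain ⟨a, a', ha, ha', heq⟩ := hv
    have hs : ⟪v - vbar, (ν : E2)⟫ = ⟪e₁, v⟫ * n₁ + ⟪e₂, v⟫ * n₂ - c₀ := by
      have hvsum : ⟪e₁, v⟫ • e₁ + ⟪e₂, v⟫ • e₂ = v := by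
        have h := b.sum_repr v
        rw [Fin.sum_univ_two, b.repr_apply_apply, b.repr_apply_apply, hb0, hb1] at h
        exact h
      have : ⟪v, (ν : E2)⟫ = ⟪e₁, v⟫ * n₁ + ⟪e₂, v⟫ * n₂ := by
        conv_lhs => rw [← hvsum]
        rw [inner_add_left, real_inner_smul_left, real_inner_smul_left, ← hn₁, ← hn₂]
      rw [inner_sub_left, this, ← hc₀]
    have key1 : a = ⟪e₁, v⟫ - ⟪v - vbar, (ν : E2)⟫ * n₁ - K₁ := by
      have h1 := congrArg (fun z : E2 => ⟪e₁, z⟫) heq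
      simp only [scat, inner_sub_right, inner_add_right, real_inner_smul_right,
        hi11, he₁₂, mul_one, mul_zero] at h1
      rw [← hn₁] at h1
      rw [hK₁]
      linarith
    have key2 : a' = ⟪e₂, v⟫ - ⟪v - vbar, (ν : E2)⟫ * n₂ - K₂ := by
      have h1 := congrArg (fun z : E2 => ⟪e₂, z⟫) heq
      simp only [scat, inner_sub_right, inner_add_right, real_inner_smul_right,
        hi22, hi21, mul_one, mul_zero] at h1
      rw [← hn₂] at h1
      rw [hK₂]
      linarith
    have hων : ⟪ω, v⟫ = n₂ * ⟪e₁, v⟫ - n₁ * ⟪e₂, v⟫ := by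
      rw [hω, inner_sub_left, real_inner_smul_left, real_inner_smul_left]
    by_cases hcase : m ≤ |n₂|
    · have hn₂0 : n₂ ≠ 0 := by
        intro h0
        rw [h0, abs_zero] at hcase
        linarith
      rw [hJ, if_pos hcase]
      apply mem_uIcc_of_mul hn₂0
      have hid : n₂ * ⟪ω, v⟫ = a + (K₁ - c₀ * n₁) := by
        rw [hων, key1, hs]
        linear_combination (⟪e₁, v⟫ : ℝ) * hn
      rw [hid, Set.mem_Icc]
      exact ⟨by linarith [ha.1], by linarith [ha.2]⟩
    · have hn₁2 : 1 / 2 ≤ |n₁| := hn₁big hcase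
      have hn₁0 : -n₁ ≠ 0 := by
        intro h0
        rw [show n₁ = 0 by linarith [neg_eq_zero.mp h0], abs_zero] at hn₁2
        linarith
      rw [hJ, if_neg hcase]
      apply mem_uIcc_of_mul hn₁0
      have hid : -n₁ * ⟪ω, v⟫ = a' + (K₂ - c₀ * n₂) := by
        rw [hων, key2, hs]
        linear_combination (⟪e₂, v⟫ : ℝ) * hn
      rw [hid, Set.mem_Icc]
      exact ⟨by linarith [ha'.1], by linarith [ha'.2]⟩
  -- now the integral estimate
  set Q : Set E2 := (fun v : E2 => ⟪ω, v⟫) ⁻¹' J with hQ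
  have hQmeas : MeasurableSet Q :=
    ((continuous_const.inner continuous_id).measurable) hJmeas
  have step1 : (∫ v in Metric.ball (0 : E2) R,
        Set.indicator {v : E2 | scat vbar v (ν : E2) - vj ∈ rect c e₁ e₂ δ δ'}
          (fun v => |⟪v - vbar, (ν : E2)⟫|) v ∂volume)
      ≤ ∫ v in Metric.ball (0 : E2) R, Q.indicator (fun _ => 2 * R) v ∂volume := by
    apply integral_mono_of_nonneg
    · exact Filter.Eventually.of_forall fun v =>
        Set.indicator_apply_nonneg fun _ => abs_nonneg _
    · exact (integrableOn_const measure_ball_lt_top.ne).indicator hQmeas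
    · rw [Filter.EventuallyLE, ae_restrict_iff' measurableSet_ball]
      refine Filter.Eventually.of_forall fun v hv => ?_
      by_cases hvP : v ∈ {v : E2 | scat vbar v (ν : E2) - vj ∈ rect c e₁ e₂ δ δ'}
      · rw [Set.indicator_of_mem hvP, Set.indicator_of_mem (show v ∈ Q from hJmem v hvP)]
        calc |⟪v - vbar, (ν : E2)⟫| ≤ ‖v - vbar‖ * ‖(ν : E2)‖ := abs_real_inner_le_norm _ _
          _ = ‖v - vbar‖ := by rw [hνn, mul_one]
          _ ≤ ‖v‖ + ‖vbar‖ := norm_sub_le _ _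
          _ ≤ 2 * R := by
              have hvR : ‖v‖ < R := mem_ball_zero_iff.1 hv
              linarith
      · rw [Set.indicator_of_notMem hvP]
        exact Set.indicator_apply_nonneg fun _ => by linarith
  have step2 : (∫ v in Metric.ball (0 : E2) R, Q.indicator (fun _ => 2 * R) v ∂volume)
      = (volume (Q ∩ Metric.ball (0 : E2) R)).toReal * (2 * R) := by
    rw [integral_indicator_const _ hQmeas, measureReal_restrict_apply hQmeas, smul_eq_mul, measureReal_def]
  have step3 : volume (Q ∩ Metric.ball (0 : E2) R) ≤ ENNReal.ofReal (2 * R * (δ / t)) := by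
    calc volume (Q ∩ Metric.ball (0 : E2) R)
        ≤ volume {v : E2 | ‖v‖ < R ∧ ⟪ω, v⟫ ∈ J} := by
          apply measure_mono
          rintro v ⟨hvQ, hvB⟩
          exact ⟨mem_ball_zero_iff.1 hvB, hvQ⟩
      _ ≤ ENNReal.ofReal (2 * R) * volume J := volume_slab ω hωn R J hJmeas
      _ ≤ ENNReal.ofReal (2 * R) * ENNReal.ofReal (δ / t) := mul_le_mul_right hJvol _
      _ = ENNReal.ofReal (2 * R * (δ / t)) := (ENNReal.ofReal_mul (by linarith)).symm
  have htoReal : (volume (Q ∩ Metric.ball (0 : E2) R)).toReal ≤ 2 * R * (δ / t) :=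
    ENNReal.toReal_le_of_le_ofReal (by positivity) step3
  calc (∫ v in Metric.ball (0 : E2) R,
        Set.indicator {v : E2 | scat vbar v (ν : E2) - vj ∈ rect c e₁ e₂ δ δ'}
          (fun v => |⟪v - vbar, (ν : E2)⟫|) v ∂volume)
      ≤ (volume (Q ∩ Metric.ball (0 : E2) R)).toReal * (2 * R) := step2 ▸ step1
    _ ≤ 2 * R * (δ / t) * (2 * R) := by
        apply mul_le_mul_of_nonneg_right htoReal (by linarith)
    _ = 4 * R ^ 2 * (δ / t) := by ring

/-- Velocities confined to a rectangle: if `𝓡` is a rectangle with side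
lengths `δ ≤ δ' ≤ 1`, then
`∫ 1_{v_i - v_j ∈ 𝓡} |(v* - v̄_i)·ν*| dv* dν* ≤ C R² δ (|log δ| + |log δ'| + 1)`. -/
theorem statement12 :
    ∃ C : ℝ, 0 < C ∧
      ∀ (R δ δ' : ℝ) (c e₁ e₂ vbar vj : E2),
        1 < R → 0 < δ → δ ≤ δ' → δ' ≤ 1 →
        ‖e₁‖ = 1 → ‖e₂‖ = 1 → ⟪e₁, e₂⟫ = 0 → ‖vbar‖ ≤ R → ‖vj‖ ≤ R →
        (∫ ν : sphere (0 : E2) 1, ∫ v in Metric.ball (0 : E2) R,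
            Set.indicator {v : E2 | scat vbar v (ν : E2) - vj ∈ rect c e₁ e₂ δ δ'}
              (fun v => |⟪v - vbar, (ν : E2)⟫|) v ∂volume ∂sphμ)
          ≤ C * R ^ 2 * δ * (|Real.log δ| + |Real.log δ'| + 1) := by
  classical
  refine ⟨192, by norm_num, ?_⟩
  intro R δ δ' c e₁ e₂ vbar vj hR hδ hδδ' hδ'1 he₁ he₂ he₁₂ hvbar hvj
  have hδ' : 0 < δ' := lt_of_lt_of_le hδ hδδ'
  have hR0 : (0:ℝ) < R := lt_trans one_pos hR
  set m := δ / (2 * δ') with hm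
  have hm0 : 0 < m := by positivity
  set L := |Real.log δ| + |Real.log δ'| with hL
  have hL0 : 0 ≤ L := by positivity
  set x := 2 * δ' / δ with hx
  have hx2 : (2:ℝ) ≤ x := by
    rw [hx, le_div_iff₀ hδ]; linarith
  have hx0 : (0:ℝ) < x := by linarith
  have hlogb0 : 0 ≤ Real.logb 2 x := by
    apply Real.logb_nonneg one_lt_two; linarith
  set N := ⌈Real.logb 2 x⌉₊ with hN
  -- (1/2)^N ≤ m
  have hNm : ((1:ℝ)/2) ^ N ≤ m := by
    have h2N : x ≤ (2:ℝ) ^ N := by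
      calc x = (2:ℝ) ^ Real.logb 2 x := by
            rw [Real.rpow_logb two_pos (by norm_num) hx0]
        _ ≤ (2:ℝ) ^ (N : ℝ) := by
            apply Real.rpow_le_rpow_left_iff (by norm_num : (1:ℝ) < 2) |>.mpr
            exact Nat.le_ceil _
        _ = (2:ℝ) ^ N := by rw [Real.rpow_natCast]
    have hmx : m = x⁻¹ := by
      rw [hm, hx]
      rw [inv_div]
    rw [hmx, one_div, inv_pow]
    exact inv_anti₀ hx0 h2N
  -- N + 1 ≤ 3 (L + 1)
  have hNle : (N : ℝ) + 1 ≤ 3 * (L + 1) := by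
    have hceil : (N : ℝ) < Real.logb 2 x + 1 := Nat.ceil_lt_add_one hlogb0
    have hlog2 : (0.6931:ℝ) < Real.log 2 := by
      have := Real.log_two_gt_d9; linarith
    have hlogx : Real.log x = Real.log 2 + Real.log δ' - Real.log δ := by
      rw [hx, Real.log_div (by positivity) (ne_of_gt hδ), Real.log_mul (by norm_num) (ne_of_gt hδ')]
    have hlogxle : Real.log x ≤ Real.log 2 + L := by
      rw [hlogx, hL]
      have := le_abs_self (Real.log δ')
      have := neg_abs_le (Real.log δ)
      linarith
    have hlogb : Real.logb 2 x ≤ 1 + 2 * L := by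
      rw [Real.logb, div_le_iff₀ (by linarith)]
      nlinarith
    linarith
  -- the dyadic sets
  set A : ℕ → Set (sphere (0 : E2) 1) :=
    fun k => {ν : sphere (0 : E2) 1 | |⟪e₂, (ν : E2)⟫| ≤ (1/2:ℝ) ^ k} with hA
  have hAmeas : ∀ k, MeasurableSet (A k) := by
    intro k
    have hcont : Continuous fun ν : sphere (0 : E2) 1 => |⟪e₂, (ν : E2)⟫| :=
      (Continuous.inner continuous_const continuous_subtype_val).abs
    exact (isClosed_le hcont continuous_const).measurableSet
  set F : (sphere (0 : E2) 1) → ℝ := fun ν =>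
    4 * R ^ 2 * δ * ∑ k ∈ Finset.range (N + 1),
      (2:ℝ) ^ (k+1) * (A k).indicator (fun _ => (1:ℝ)) ν with hF
  have hFint : Integrable F sphμ := by
    apply Integrable.const_mul
    apply integrable_finset_sum
    intro k _
    exact ((integrable_const (1:ℝ)).indicator (hAmeas k)).const_mul _
  -- pointwise bound
  have hpt : ∀ ν : sphere (0 : E2) 1,
      (∫ v in Metric.ball (0 : E2) R,
        Set.indicator {v : E2 | scat vbar v (ν : E2) - vj ∈ rect c e₁ e₂ δ δ'}
          (fun v => |⟪v - vbar, (ν : E2)⟫|) v ∂volume) ≤ F ν := by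
    intro ν
    refine le_trans (inner_est R δ δ' c e₁ e₂ vbar vj hR hδ hδδ' hδ'1 he₁ he₂ he₁₂ hvbar ν) ?_
    set n₂ := ⟪e₂, (ν : E2)⟫ with hn₂
    have hn₂1 : |n₂| ≤ 1 := by
      calc |n₂| ≤ ‖e₂‖ * ‖(ν : E2)‖ := abs_real_inner_le_norm _ _
        _ = 1 := by rw [he₂, norm_eq_of_mem_sphere ν, mul_one]
    set t := max |n₂| m with ht
    have ht0 : 0 < t := lt_max_of_lt_right hm0
    set P : ℕ → Prop := fun k => |n₂| ≤ (1/2:ℝ) ^ k with hP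
    set k₀ := Nat.findGreatest P N with hk₀
    have hP0 : P 0 := by rw [hP]; simpa using hn₂1
    have hk₀P : P k₀ := Nat.findGreatest_spec (Nat.zero_le N) hP0
    have hk₀N : k₀ ≤ N := Nat.findGreatest_le N
    have htk : ((1:ℝ)/2) ^ (k₀ + 1) ≤ t := by
      rcases eq_or_lt_of_le hk₀N with heq | hlt
      · calc ((1:ℝ)/2) ^ (k₀ + 1) ≤ ((1:ℝ)/2) ^ N := by
              apply pow_le_pow_of_le_one (by norm_num) (by norm_num)
              omega
          _ ≤ m := hNm
          _ ≤ t := le_max_right _ _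
      · have hnot : ¬ P (k₀ + 1) :=
          Nat.findGreatest_is_greatest (Nat.lt_succ_self k₀) (by omega)
        rw [hP] at hnot
        push_neg at hnot
        calc ((1:ℝ)/2) ^ (k₀+1) ≤ |n₂| := hnot.le
          _ ≤ t := le_max_left _ _
    have hδt : δ / t ≤ δ * (2:ℝ) ^ (k₀ + 1) := by
      rw [div_le_iff₀ ht0]
      have hpow : ((1:ℝ)/2) ^ (k₀+1) * (2:ℝ) ^ (k₀+1) = 1 := by
        rw [← mul_pow]; norm_num
      calc δ = δ * (((1:ℝ)/2) ^ (k₀+1) * (2:ℝ) ^ (k₀+1)) := by rw [hpow, mul_one]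
        _ ≤ δ * ((2:ℝ) ^ (k₀+1) * t) := by
            rw [← mul_comm ((2:ℝ) ^ (k₀+1))] at *
            apply mul_le_mul_of_nonneg_left _ hδ.le
            apply mul_le_mul_of_nonneg_left htk (by positivity)
        _ = δ * (2:ℝ) ^ (k₀+1) * t := by ring
    have hsum : (2:ℝ) ^ (k₀+1) ≤ ∑ k ∈ Finset.range (N + 1),
        (2:ℝ) ^ (k+1) * (A k).indicator (fun _ => (1:ℝ)) ν := by
      have hmem : ν ∈ A k₀ := hk₀P
      have hterm : (2:ℝ) ^ (k₀+1) * (A k₀).indicator (fun _ => (1:ℝ)) ν = (2:ℝ) ^ (k₀+1) := by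
        rw [Set.indicator_of_mem hmem, mul_one]
      rw [← hterm]
      apply Finset.single_le_sum
        (f := fun k => (2:ℝ) ^ (k+1) * (A k).indicator (fun _ => (1:ℝ)) ν)
      · intro i _
        apply mul_nonneg (by positivity)
        exact Set.indicator_apply_nonneg fun _ => by norm_num
      · rw [Finset.mem_range]; omega
    calc 4 * R ^ 2 * (δ / t) ≤ 4 * R ^ 2 * (δ * (2:ℝ) ^ (k₀+1)) := by
          apply mul_le_mul_of_nonneg_left hδt (by positivity)
      _ ≤ 4 * R ^ 2 * (δ * ∑ k ∈ Finset.range (N + 1),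
            (2:ℝ) ^ (k+1) * (A k).indicator (fun _ => (1:ℝ)) ν) := by
          apply mul_le_mul_of_nonneg_left _ (by positivity)
          apply mul_le_mul_of_nonneg_left hsum hδ.le
      _ = F ν := by rw [hF]; ring
  -- integrate
  have hstep : (∫ ν : sphere (0 : E2) 1, ∫ v in Metric.ball (0 : E2) R,
            Set.indicator {v : E2 | scat vbar v (ν : E2) - vj ∈ rect c e₁ e₂ δ δ'}
              (fun v => |⟪v - vbar, (ν : E2)⟫|) v ∂volume ∂sphμ) ≤ ∫ ν, F ν ∂sphμ := by
    apply integral_mono_of_nonneg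
    · refine Filter.Eventually.of_forall fun ν => ?_
      apply integral_nonneg
      intro v
      exact Set.indicator_apply_nonneg fun _ => abs_nonneg _
    · exact hFint
    · exact Filter.Eventually.of_forall hpt
  have hFval : (∫ ν, F ν ∂sphμ) ≤ 4 * R ^ 2 * δ * (16 * (N + 1)) := by
    rw [hF]
    simp only []
    rw [integral_const_mul]
    have hsummed : (∫ ν, (∑ k ∈ Finset.range (N + 1),
        (2:ℝ) ^ (k+1) * (A k).indicator (fun _ => (1:ℝ)) ν) ∂sphμ)
        = ∑ k ∈ Finset.range (N + 1), (2:ℝ) ^ (k+1) * (sphμ (A k)).toReal := by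
      rw [integral_finset_sum]
      · apply Finset.sum_congr rfl
        intro k _
        rw [integral_const_mul, integral_indicator_const _ (hAmeas k), smul_eq_mul, mul_one, measureReal_def]
      · intro k _
        exact ((integrable_const (1:ℝ)).indicator (hAmeas k)).const_mul _
    rw [hsummed]
    have hbound : (∑ k ∈ Finset.range (N + 1), (2:ℝ) ^ (k+1) * (sphμ (A k)).toReal)
        ≤ 16 * (N + 1) := by
      calc (∑ k ∈ Finset.range (N + 1), (2:ℝ) ^ (k+1) * (sphμ (A k)).toReal)
          ≤ ∑ k ∈ Finset.range (N + 1), (16:ℝ) := by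
            apply Finset.sum_le_sum
            intro k _
            have h1 : (sphμ (A k)).toReal ≤ 8 * (1/2:ℝ) ^ k := by
              apply ENNReal.toReal_le_of_le_ofReal (by positivity)
              exact sphμ_slab e₂ he₂ _
            calc (2:ℝ) ^ (k+1) * (sphμ (A k)).toReal
                ≤ (2:ℝ) ^ (k+1) * (8 * (1/2:ℝ) ^ k) := by
                  apply mul_le_mul_of_nonneg_left h1 (by positivity)
              _ = 16 * ((2:ℝ) ^ k * (1/2:ℝ) ^ k) := by ring
              _ = 16 := by rw [← mul_pow]; norm_num
        _ = 16 * (N + 1) := by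
            rw [Finset.sum_const, Finset.card_range]
            push_cast
            ring
    exact mul_le_mul_of_nonneg_left hbound (by positivity)
  calc (∫ ν : sphere (0 : E2) 1, ∫ v in Metric.ball (0 : E2) R,
            Set.indicator {v : E2 | scat vbar v (ν : E2) - vj ∈ rect c e₁ e₂ δ δ'}
              (fun v => |⟪v - vbar, (ν : E2)⟫|) v ∂volume ∂sphμ)
      ≤ 4 * R ^ 2 * δ * (16 * (N + 1)) := le_trans hstep hFval
    _ ≤ 4 * R ^ 2 * δ * (16 * (3 * (L + 1))) := by
        apply mul_le_mul_of_nonneg_left _ (by positivity)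
        have : ((N:ℝ) + 1) ≤ 3 * (L + 1) := hNle
        linarith
    _ = 192 * R ^ 2 * δ * (L + 1) := by ring
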